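/- arXiv:1907.12323 — 2 statements merged into one kernel-verified Lean document; each statement's English description precedes it below -/
import Mathlib

section
/- Helson's theorem. Let (a_n)_{n≥1} be a sequence of complex numbers with ∑_{n=1}^∞ |a_n|² < ∞. Then for almost every z ∈ 𝕋^∞ (with respect to m), the Dirichlet series ∑_{n=1}^∞ a_n χ_z(n) n^{−s} converges — i.e., the partial sums ∑_{n=1}^N a_n χ_z(n) n^{−s} converge as N → ∞ — for every s ∈ ℂ with Re s > 0. -/
open MeasureTheory Filter Topology Finset
open scoped ENNReal NNReal

noncomputable section

/-- Borel measurable structure on the circle `𝕋 = {w ∈ ℂ : |w| = 1}`. -/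
instance : MeasurableSpace Circle := borel Circle
instance : BorelSpace Circle := ⟨rfl⟩

/-- The infinite torus `𝕋^∞`, the countable product of circles. -/
abbrev TorusInf : Type := ℕ → Circle

/-- The Haar probability measure `m` on the compact abelian group `𝕋^∞`. -/
def haarT : Measure TorusInf :=
  Measure.haarMeasure ⟨⟨Set.univ, isCompact_univ⟩, by simp⟩

/-- The completely multiplicative character `χ_z : ℕ → 𝕋` determined by `z ∈ 𝕋^∞`:
`χ_z(n) = ∏_k z_k ^ ν_k(n)`, where `ν_k(n)` is the exponent of the `k`-th prime `p_k`
in the prime factorization of `n` (primes are enumerated by `Nat.nth Nat.Prime`, and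
the index of a prime `p` is `Nat.count Nat.Prime p`). -/
def chiz (z : TorusInf) (n : ℕ) : ℂ :=
  ∏ p ∈ n.primeFactors, (z (Nat.count Nat.Prime p) : ℂ) ^ (n.factorization p)

instance : haarT.IsMulLeftInvariant := by unfold haarT; infer_instance

instance : IsProbabilityMeasure haarT := by
  constructor
  rw [haarT]
  have := Measure.haarMeasure_self (G := TorusInf) (K₀ := ⟨⟨Set.univ, isCompact_univ⟩, by simp⟩)
  simpa using this

lemma cont_monomial (F : Finset ℕ) (e : ℕ → ℤ) :
    Continuous (fun z : TorusInf => ∏ k ∈ F, (z k : ℂ) ^ (e k)) := by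
  apply continuous_finset_prod
  intro k _
  have h1 : Continuous fun z : TorusInf => (z k : ℂ) := by
    exact continuous_subtype_val.comp (continuous_apply k)
  apply h1.zpow₀
  intro z
  left
  exact Circle.coe_ne_zero (z k)

lemma integral_monomial_eq_zero (F : Finset ℕ) (e : ℕ → ℤ) (k₀ : ℕ) (hk₀ : k₀ ∈ F)
    (he : e k₀ ≠ 0) :
    ∫ z, (∏ k ∈ F, (z k : ℂ) ^ (e k)) ∂haarT = 0 := by
  set w : Circle := Circle.exp (Real.pi / (e k₀)) with hw
  have hwe : (w : ℂ) ^ (e k₀) = -1 := by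
    rw [hw]
    have : ((Circle.exp (Real.pi / (e k₀)) : Circle) : ℂ) = Complex.exp ((Real.pi / (e k₀) : ℝ) * Complex.I) := by
      simp [Circle.coe_exp]
    rw [this, ← Complex.exp_int_mul]
    have : (e k₀ : ℂ) * (((Real.pi / (e k₀) : ℝ) : ℂ) * Complex.I) = Real.pi * Complex.I := by
      have hne : (e k₀ : ℂ) ≠ 0 := Int.cast_ne_zero.mpr he
      push_cast
      field_simp
    rw [this, Complex.exp_pi_mul_I]
  set u : TorusInf := fun k => if k = k₀ then w else 1 with hu
  have inv := integral_mul_left_eq_self (μ := haarT) (fun z => ∏ k ∈ F, (z k : ℂ) ^ e k) u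
  have key : ∀ z : TorusInf, (∏ k ∈ F, ((u * z) k : ℂ) ^ e k)
      = (w : ℂ) ^ (e k₀) * ∏ k ∈ F, (z k : ℂ) ^ e k := by
    intro z
    have : ∀ k ∈ F, ((u * z) k : ℂ) ^ e k = ((u k : ℂ) ^ e k) * ((z k : ℂ) ^ e k) := by
      intro k _
      simp [Pi.mul_apply, mul_zpow]
    rw [Finset.prod_congr rfl this, Finset.prod_mul_distrib]
    congr 1
    rw [Finset.prod_eq_single k₀]
    · simp [hu]
    · intro k _ hk; simp [hu, hk]
    · intro h; exact absurd hk₀ h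
  simp only [key] at inv
  rw [integral_const_mul, hwe] at inv
  linear_combination -inv/2

def Efun (m n k : ℕ) : ℤ :=
  (m.factorization (Nat.nth Nat.Prime k) : ℤ) - (n.factorization (Nat.nth Nat.Prime k) : ℤ)

def Ffin (m n : ℕ) : Finset ℕ := (m.primeFactors ∪ n.primeFactors).image (Nat.count Nat.Prime)

lemma chiz_extend (z : TorusInf) (n : ℕ) (U : Finset ℕ) (hU : n.primeFactors ⊆ U) :
    chiz z n = ∏ p ∈ U, (z (Nat.count Nat.Prime p) : ℂ) ^ (n.factorization p) := by
  rw [chiz]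
  apply Finset.prod_subset hU
  intro p _ hp
  have : n.factorization p = 0 := by
    rwa [← Finsupp.notMem_support_iff, Nat.support_factorization]
  simp [this]

lemma chiz_mul_conj (z : TorusInf) (m n : ℕ) :
    chiz z m * (starRingEnd ℂ) (chiz z n) = ∏ k ∈ Ffin m n, (z k : ℂ) ^ (Efun m n k) := by
  set U := m.primeFactors ∪ n.primeFactors with hU
  have hprime : ∀ p ∈ U, p.Prime := by
    intro p hp
    rcases Finset.mem_union.mp hp with h | h
    exacts [Nat.prime_of_mem_primeFactors h, Nat.prime_of_mem_primeFactors h]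
  rw [chiz_extend z m U Finset.subset_union_left, chiz_extend z n U Finset.subset_union_right,
    map_prod, ← Finset.prod_mul_distrib]
  rw [Ffin, Finset.prod_image]
  · apply Finset.prod_congr rfl
    intro p hp
    have hnth : Nat.nth Nat.Prime (Nat.count Nat.Prime p) = p := Nat.nth_count (hprime p hp)
    rw [Efun, hnth]
    have hconj : (starRingEnd ℂ) ((z (Nat.count Nat.Prime p) : ℂ) ^ (n.factorization p))
        = (z (Nat.count Nat.Prime p) : ℂ) ^ (-(n.factorization p : ℤ)) := by
      rw [map_pow, ← Circle.coe_inv_eq_conj, zpow_neg, ← zpow_natCast, ← inv_zpow]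
      norm_cast
    rw [hconj, sub_eq_add_neg, zpow_add₀ (Circle.coe_ne_zero _), zpow_natCast]
  · intro p hp q hq hpq
    have := congrArg (Nat.nth Nat.Prime) hpq
    rwa [Nat.nth_count (hprime p hp), Nat.nth_count (hprime q hq)] at this

lemma continuous_chiz (n : ℕ) : Continuous fun z : TorusInf => chiz z n := by
  unfold chiz
  apply continuous_finset_prod
  intro p _
  exact (continuous_subtype_val.comp (continuous_apply _)).pow _

lemma integrable_of_continuous {f : TorusInf → ℂ} (hf : Continuous f) : Integrable f haarT := by
  apply hf.integrable_of_hasCompactSupport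
  exact HasCompactSupport.of_compactSpace f

lemma integral_chiz_orth (m n : ℕ) (hm : m ≠ 0) (hn : n ≠ 0) :
    ∫ z, chiz z m * (starRingEnd ℂ) (chiz z n) ∂haarT = if m = n then 1 else 0 := by
  simp only [chiz_mul_conj]
  rcases eq_or_ne m n with rfl | hmn
  · simp only [if_pos rfl]
    have : ∀ z : TorusInf, (∏ k ∈ Ffin m m, (z k : ℂ) ^ (Efun m m k)) = 1 := by
      intro z
      apply Finset.prod_eq_one
      intro k _
      simp [Efun]
    simp only [this]
    simp
  · rw [if_neg hmn]
    -- find a prime where factorizations differ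
    have hfact : m.factorization ≠ n.factorization := by
      intro h
      exact hmn (Nat.factorization_inj hm hn h)
    have : ∃ p, m.factorization p ≠ n.factorization p := by
      by_contra h
      push_neg at h
      exact hfact (Finsupp.ext h)
    obtain ⟨p, hp⟩ := this
    have hpp : p.Prime := by
      by_contra hnp
      rw [Nat.factorization_eq_zero_of_not_prime m hnp,
        Nat.factorization_eq_zero_of_not_prime n hnp] at hp
      exact hp rfl
    have hpU : p ∈ m.primeFactors ∪ n.primeFactors := by
      rcases Nat.eq_zero_or_pos (m.factorization p) with h0 | h0
      · have : n.factorization p ≠ 0 := by omega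
        refine Finset.mem_union_right _ ?_
        rw [← Nat.support_factorization]
        exact Finsupp.mem_support_iff.mpr this
      · refine Finset.mem_union_left _ ?_
        rw [← Nat.support_factorization]
        exact Finsupp.mem_support_iff.mpr (by omega)
    refine integral_monomial_eq_zero _ _ (Nat.count Nat.Prime p) ?_ ?_
    · exact Finset.mem_image_of_mem _ hpU
    · rw [Efun, Nat.nth_count hpp]
      intro h
      apply hp
      omega

lemma integral_norm_sq_sum (c : ℕ → ℂ) (t j : ℕ) (ht : 1 ≤ t) :
    ∫ z, ‖∑ n ∈ Finset.Ico t j, c n * chiz z n‖ ^ 2 ∂haarT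
      = ∑ n ∈ Finset.Ico t j, ‖c n‖ ^ 2 := by
  have expand : ∀ z : TorusInf,
      ((‖∑ n ∈ Finset.Ico t j, c n * chiz z n‖ ^ 2 : ℝ) : ℂ)
        = ∑ i ∈ Finset.Ico t j, ∑ l ∈ Finset.Ico t j,
            (c i * (starRingEnd ℂ) (c l)) * (chiz z i * (starRingEnd ℂ) (chiz z l)) := by
    intro z
    push_cast
    rw [← Complex.mul_conj']
    rw [map_sum, Finset.sum_mul_sum]
    apply Finset.sum_congr rfl; intro i _
    apply Finset.sum_congr rfl; intro l _
    rw [map_mul]; ring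
  have : ∫ z, ((‖∑ n ∈ Finset.Ico t j, c n * chiz z n‖ ^ 2 : ℝ) : ℂ) ∂haarT
      = ((∑ n ∈ Finset.Ico t j, ‖c n‖ ^ 2 : ℝ) : ℂ) := by
    simp only [expand]
    rw [integral_finset_sum]
    · have inner : ∀ i ∈ Finset.Ico t j,
          ∫ z, (∑ l ∈ Finset.Ico t j,
            (c i * (starRingEnd ℂ) (c l)) * (chiz z i * (starRingEnd ℂ) (chiz z l))) ∂haarT
          = ‖c i‖ ^ 2 := by
        intro i hi
        rw [integral_finset_sum]
        · have : ∀ l ∈ Finset.Ico t j,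
              ∫ z, (c i * (starRingEnd ℂ) (c l)) * (chiz z i * (starRingEnd ℂ) (chiz z l)) ∂haarT
              = if i = l then ((‖c i‖ ^2 : ℝ) : ℂ) else 0 := by
            intro l hl
            rw [integral_const_mul, integral_chiz_orth i l
              (by have := (Finset.mem_Ico.mp hi).1; omega)
              (by have := (Finset.mem_Ico.mp hl).1; omega)]
            rcases eq_or_ne i l with rfl | h
            · simp [Complex.mul_conj']
            · simp [h]
          rw [Finset.sum_congr rfl this, Finset.sum_ite_eq (Finset.Ico t j) i, if_pos hi]
          push_cast
          ring
        · intro l _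
          apply Integrable.const_mul
          apply integrable_of_continuous
          exact (continuous_chiz i).mul (Complex.continuous_conj.comp (continuous_chiz l))
      rw [Finset.sum_congr rfl inner]
      push_cast
      ring
    · intro i _
      apply integrable_finset_sum
      intro l _
      apply Integrable.const_mul
      apply integrable_of_continuous
      exact (continuous_chiz i).mul (Complex.continuous_conj.comp (continuous_chiz l))
  have h2 : ((∫ z, ‖∑ n ∈ Finset.Ico t j, c n * chiz z n‖ ^ 2 ∂haarT : ℝ) : ℂ)
      = ((∑ n ∈ Finset.Ico t j, ‖c n‖ ^ 2 : ℝ) : ℂ) :=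
    (integral_ofReal (𝕜 := ℂ)).symm.trans this
  exact_mod_cast h2

def Dfun (c : ℕ → ℂ) (t j : ℕ) (z : TorusInf) : ℝ≥0∞ :=
  (‖∑ n ∈ Finset.Ico t (t + j), c n * chiz z n‖₊ : ℝ≥0∞)

lemma continuous_Ssum (c : ℕ → ℂ) (t u : ℕ) :
    Continuous fun z : TorusInf => ∑ n ∈ Finset.Ico t u, c n * chiz z n := by
  apply continuous_finset_sum
  intro n _
  exact continuous_const.mul (continuous_chiz n)

lemma measurable_Dfun (c : ℕ → ℂ) (t j : ℕ) : Measurable (Dfun c t j) :=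
  ((continuous_Ssum c t (t + j)).measurable.nnnorm).coe_nnreal_ennreal

lemma Dfun_pointwise (c : ℕ → ℂ) (t j : ℕ) (z : TorusInf) :
    (Dfun c t j z) ^ (2:ℝ)
      = ENNReal.ofReal (‖∑ n ∈ Finset.Ico t (t + j), c n * chiz z n‖ ^ 2) := by
  rw [Dfun, show (2:ℝ) = ((2:ℕ):ℝ) by norm_num, ENNReal.rpow_natCast,
    ← enorm_eq_nnnorm, ← ofReal_norm, ← ENNReal.ofReal_pow (norm_nonneg _)]

lemma lintegral_Dfun_sq (c : ℕ → ℂ) (t j : ℕ) (ht : 1 ≤ t) :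
    ∫⁻ z, (Dfun c t j z) ^ (2:ℝ) ∂haarT
      = ENNReal.ofReal (∑ n ∈ Finset.Ico t (t + j), ‖c n‖ ^ 2) := by
  simp only [Dfun_pointwise]
  rw [← MeasureTheory.ofReal_integral_eq_lintegral_ofReal, integral_norm_sq_sum c t (t+j) ht]
  · have hcont : Continuous fun z : TorusInf => ‖∑ n ∈ Finset.Ico t (t+j), c n * chiz z n‖ ^ 2 :=
      ((continuous_Ssum c t (t+j)).norm).pow 2
    exact hcont.integrable_of_hasCompactSupport (HasCompactSupport.of_compactSpace _)
  · exact Filter.Eventually.of_forall fun z => sq_nonneg _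

lemma measurable_supD (c : ℕ → ℂ) (t : ℕ) (s : Finset ℕ) :
    Measurable fun z => s.sup (fun j => Dfun c t j z) := by
  classical
  induction s using Finset.induction with
  | empty => simp [measurable_const]
  | insert _ _ h ih =>
    simp only [Finset.sup_insert]
    exact (measurable_Dfun c t _).sup ih

lemma sq_half_cancel (u : ℝ≥0∞) : (u ^ (1/2:ℝ)) ^ (2:ℝ) = u := by
  rw [← ENNReal.rpow_mul]
  norm_num

lemma le_sq_of_half_le {u v : ℝ≥0∞} (h : u ^ (1/2:ℝ) ≤ v) : u ≤ v ^ (2:ℝ) := by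
  calc u = (u ^ (1/2:ℝ)) ^ (2:ℝ) := (sq_half_cancel u).symm
    _ ≤ v ^ (2:ℝ) := ENNReal.rpow_le_rpow h (by norm_num)

lemma maximal_ineq (c : ℕ → ℂ) (r : ℕ) : ∀ t : ℕ, 1 ≤ t →
    (∫⁻ z, ((Finset.range (2^r+1)).sup fun j => Dfun c t j z) ^ (2:ℝ) ∂haarT) ^ (1/2:ℝ)
      ≤ ((r:ℝ≥0∞)+1) * ENNReal.ofReal (∑ n ∈ Finset.Ico t (t + 2^r), ‖c n‖^2) ^ (1/2:ℝ) := by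
  induction r with
  | zero =>
    intro t ht
    have hsup : ∀ z, ((Finset.range (2^0+1)).sup fun j => Dfun c t j z) = Dfun c t 1 z := by
      intro z
      have h2 : Finset.range (2^0+1) = {0, 1} := by decide
      rw [h2]
      simp only [Finset.sup_insert, Finset.sup_singleton]
      have : Dfun c t 0 z = 0 := by simp [Dfun]
      simp [this]
    simp only [hsup]
    rw [lintegral_Dfun_sq c t 1 ht]
    simp
  | succ r ih =>
    intro t ht
    set A := fun z => (Finset.range (2^r+1)).sup fun j => Dfun c t j z with hA
    set B := fun z => (Finset.range (2^r+1)).sup fun j => Dfun c (t+2^r) j z with hB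
    set H := Dfun c t (2^r) with hH
    set X₁ := ENNReal.ofReal (∑ n ∈ Finset.Ico t (t + 2^r), ‖c n‖^2) with hX₁
    set X₂ := ENNReal.ofReal (∑ n ∈ Finset.Ico (t+2^r) (t+2^r + 2^r), ‖c n‖^2) with hX₂
    set X := ENNReal.ofReal (∑ n ∈ Finset.Ico t (t + 2^(r+1)), ‖c n‖^2) with hX
    have hXsplit : X = X₁ + X₂ := by
      rw [hX, hX₁, hX₂, ← ENNReal.ofReal_add (by positivity) (by positivity)]
      congr 1
      have hp : 2^(r+1) = 2^r + 2^r := by rw [pow_succ, mul_two]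
      rw [← Finset.sum_Ico_consecutive (fun n => ‖c n‖^2) (Nat.le_add_right t (2^r))
        (by rw [hp, ← add_assoc]; exact Nat.le_add_right _ _ : t + 2^r ≤ t + 2^(r+1))]
      congr 1
      rw [hp, add_assoc]
    have point : ∀ z, ((Finset.range (2^(r+1)+1)).sup fun j => Dfun c t j z)
        ≤ H z + (A z ⊔ B z) := by
      intro z
      apply Finset.sup_le
      intro j hj
      rw [Finset.mem_range] at hj
      by_cases hj2 : j ≤ 2^r
      · have h1 : Dfun c t j z ≤ A z := by
          have hmem : j ∈ Finset.range (2^r+1) := Finset.mem_range.mpr (by omega)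
          exact Finset.le_sup (f := fun j => Dfun c t j z) hmem
        exact le_add_left (h1.trans le_sup_left)
      · push_neg at hj2
        have tri : ∀ x y : ℂ, (‖x + y‖₊ : ℝ≥0∞) ≤ (‖x‖₊ : ℝ≥0∞) + (‖y‖₊ : ℝ≥0∞) := fun x y => by
          exact_mod_cast nnnorm_add_le x y
        have hsplit : Dfun c t j z ≤ H z + Dfun c (t+2^r) (j - 2^r) z := by
          rw [Dfun, Dfun, hH, Dfun]
          have heq : t + 2^r + (j - 2^r) = t + j := by omega
          rw [heq]
          have hsum : ∑ n ∈ Finset.Ico t (t+j), c n * chiz z n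
              = (∑ n ∈ Finset.Ico t (t+2^r), c n * chiz z n)
              + ∑ n ∈ Finset.Ico (t+2^r) (t+j), c n * chiz z n :=
            (Finset.sum_Ico_consecutive _ (Nat.le_add_right t (2^r))
              (by omega : t + 2^r ≤ t + j)).symm
          rw [hsum]
          exact tri _ _
        refine hsplit.trans (add_le_add_right ?_ _)
        refine le_trans ?_ le_sup_right
        have hjr : j - 2^r ∈ Finset.range (2^r + 1) := by
          rw [Finset.mem_range]
          have hp : 2^(r+1) = 2^r + 2^r := by rw [pow_succ, mul_two]
          omega
        exact Finset.le_sup (f := fun j => Dfun c (t+2^r) j z) hjr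
    have measA : Measurable A := measurable_supD c t _
    have measB : Measurable B := measurable_supD c (t+2^r) _
    have measH : Measurable H := measurable_Dfun c t _
    have measC : Measurable fun z => A z ⊔ B z := measA.sup measB
    have step1 : (∫⁻ z, ((Finset.range (2^(r+1)+1)).sup fun j => Dfun c t j z) ^ (2:ℝ) ∂haarT) ^ (1/2:ℝ)
        ≤ (∫⁻ z, (H z + (A z ⊔ B z)) ^ (2:ℝ) ∂haarT) ^ (1/2:ℝ) := by
      apply ENNReal.rpow_le_rpow _ (by norm_num)
      apply lintegral_mono
      intro z
      exact ENNReal.rpow_le_rpow (point z) (by norm_num)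
    have step2 : (∫⁻ z, (H z + (A z ⊔ B z)) ^ (2:ℝ) ∂haarT) ^ (1/2:ℝ)
        ≤ (∫⁻ z, H z ^ (2:ℝ) ∂haarT) ^ (1/2:ℝ)
          + (∫⁻ z, (A z ⊔ B z) ^ (2:ℝ) ∂haarT) ^ (1/2:ℝ) := by
      have := ENNReal.lintegral_Lp_add_le (μ := haarT) measH.aemeasurable measC.aemeasurable
        (by norm_num : (1:ℝ) ≤ 2)
      simpa [Pi.add_apply] using this
    have boundH : (∫⁻ z, H z ^ (2:ℝ) ∂haarT) ^ (1/2:ℝ) ≤ X ^ (1/2:ℝ) := by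
      rw [hH, lintegral_Dfun_sq c t (2^r) ht]
      apply ENNReal.rpow_le_rpow _ (by norm_num)
      rw [hXsplit]
      exact le_self_add
    have boundC : (∫⁻ z, (A z ⊔ B z) ^ (2:ℝ) ∂haarT) ^ (1/2:ℝ)
        ≤ ((r:ℝ≥0∞)+1) * X ^ (1/2:ℝ) := by
      have hAB : ∫⁻ z, (A z ⊔ B z) ^ (2:ℝ) ∂haarT
          ≤ ∫⁻ z, A z ^ (2:ℝ) ∂haarT + ∫⁻ z, B z ^ (2:ℝ) ∂haarT := by
        rw [← lintegral_add_left (measA.pow_const _)]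
        apply lintegral_mono
        intro z
        show (A z ⊔ B z) ^ (2:ℝ) ≤ A z ^ (2:ℝ) + B z ^ (2:ℝ)
        rcases le_total (A z) (B z) with h | h
        · rw [sup_eq_right.mpr h]; exact self_le_add_left _ _
        · rw [sup_eq_left.mpr h]; exact self_le_add_right _ _
      have hA2 : ∫⁻ z, A z ^ (2:ℝ) ∂haarT ≤ (((r:ℝ≥0∞)+1) * X₁ ^ (1/2:ℝ)) ^ (2:ℝ) :=
        le_sq_of_half_le (ih t ht)
      have hB2 : ∫⁻ z, B z ^ (2:ℝ) ∂haarT ≤ (((r:ℝ≥0∞)+1) * X₂ ^ (1/2:ℝ)) ^ (2:ℝ) :=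
        le_sq_of_half_le (ih (t+2^r) (ht.trans (Nat.le_add_right _ _)))
      have expand : ∀ Y : ℝ≥0∞, (((r:ℝ≥0∞)+1) * Y ^ (1/2:ℝ)) ^ (2:ℝ)
          = ((r:ℝ≥0∞)+1) ^ (2:ℝ) * Y := by
        intro Y
        rw [ENNReal.mul_rpow_of_nonneg _ _ (by norm_num), sq_half_cancel]
      calc (∫⁻ z, (A z ⊔ B z) ^ (2:ℝ) ∂haarT) ^ (1/2:ℝ)
          ≤ ((((r:ℝ≥0∞)+1) * X₁ ^ (1/2:ℝ)) ^ (2:ℝ) + (((r:ℝ≥0∞)+1) * X₂ ^ (1/2:ℝ)) ^ (2:ℝ)) ^ (1/2:ℝ) := by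
            apply ENNReal.rpow_le_rpow _ (by norm_num)
            exact hAB.trans (add_le_add hA2 hB2)
        _ = (((r:ℝ≥0∞)+1) ^ (2:ℝ) * X) ^ (1/2:ℝ) := by
            rw [expand, expand, ← mul_add, ← hXsplit]
        _ = ((r:ℝ≥0∞)+1) * X ^ (1/2:ℝ) := by
            rw [ENNReal.mul_rpow_of_nonneg _ _ (by norm_num), ← ENNReal.rpow_mul]
            norm_num
    calc (∫⁻ z, ((Finset.range (2^(r+1)+1)).sup fun j => Dfun c t j z) ^ (2:ℝ) ∂haarT) ^ (1/2:ℝ)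
        ≤ X ^ (1/2:ℝ) + ((r:ℝ≥0∞)+1) * X ^ (1/2:ℝ) := step1.trans (step2.trans (add_le_add boundH boundC))
      _ = (((r+1:ℕ):ℝ≥0∞)+1) * X ^ (1/2:ℝ) := by push_cast; ring

def GkF (c : ℕ → ℂ) (k : ℕ) (z : TorusInf) : ℝ≥0∞ :=
  (Finset.range (2^k+1)).sup fun j => Dfun c (2^k+1) j z

set_option maxHeartbeats 1000000 in
lemma pointwise_conv (c : ℕ → ℂ) (z : TorusInf) (hz : (∑' k, GkF c k z) < ⊤) :
    ∃ L : ℂ, Tendsto (fun N : ℕ => ∑ n ∈ Finset.Icc 1 N, c n * chiz z n) atTop (𝓝 L) := by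
  have hGk : GkF c = fun k z => (Finset.range (2^k+1)).sup fun j => Dfun c (2^k+1) j z := rfl

  -- pointwise part
  set s : ℕ → ℂ := fun N => ∑ n ∈ Finset.Ico 1 (N+1), c n * chiz z n with hsdef
  have hsD : ∀ t' M : ℕ, t' ≤ M → (‖s M - s t'‖₊ : ℝ≥0∞) = Dfun c (t'+1) (M - t') z := by
    intro t' M h
    rw [hsdef, Dfun]
    congr 2
    have heq : t'+1 + (M - t') = M + 1 := by omega
    rw [heq, sub_eq_iff_eq_add']
    exact (Finset.sum_Ico_consecutive _ (by omega) (by omega)).symm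
  set y : ℕ → ℂ := fun k => s (2^k) with hy
  have hyc : CauchySeq y := by
    apply cauchySeq_of_edist_le_of_tsum_ne_top (fun k => GkF c k z) _ hz.ne
    intro k
    rw [edist_eq_enorm_sub, enorm_eq_nnnorm, hy]
    have hle : (2:ℕ)^k ≤ 2^(k+1) := Nat.pow_le_pow_right (by norm_num) (by omega)
    have h1 : (‖s (2^k) - s (2^(k+1))‖₊ : ℝ≥0∞) = Dfun c (2^k+1) (2^(k+1) - 2^k) z := by
      rw [← hsD _ _ hle]
      congr 1
      rw [← neg_sub, nnnorm_neg]
    have h2 : (2:ℕ)^(k+1) - 2^k = 2^k := by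
      have hp : (2:ℕ)^(k+1) = 2^k+2^k := by rw [pow_succ, mul_two]
      omega
    rw [h1, h2, hGk]
    exact Finset.le_sup (f := fun j => Dfun c (2^k+1) j z)
      (Finset.mem_range.mpr (by omega))
  obtain ⟨L, hL⟩ := cauchySeq_tendsto_of_complete hyc
  set tail : ℕ → ℝ≥0∞ := fun k => ∑' i, GkF c (i+k) z with htail
  have htail_le : ∀ k, tail k ≤ ∑' i, GkF c i z := by
    intro k
    rw [htail]
    exact ENNReal.tsum_comp_le_tsum_of_injective (add_left_injective k) (fun i => GkF c i z)
  have htail0 : Tendsto tail atTop (𝓝 0) := ENNReal.tendsto_sum_nat_add _ hz.ne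
  have hgap : ∀ k M, 2^k ≤ M → (‖s M - s (2^k)‖₊ : ℝ≥0∞) ≤ tail k := by
    intro k M hM
    have hQ : ∀ l, ∀ M', 2^k ≤ M' → M' ≤ 2^(k+l) →
        (‖s M' - s (2^k)‖₊ : ℝ≥0∞) ≤ ∑ i ∈ Finset.range l, GkF c (i+k) z := by
      intro l
      induction l with
      | zero =>
        intro M' h1 h2
        simp only [Nat.add_zero] at h2
        have hMeq : M' = 2^k := by omega
        rw [hMeq, sub_self, nnnorm_zero]
        simp
      | succ l ih =>
        intro M' h1 h2
        by_cases hM2 : M' ≤ 2^(k+l)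
        · exact (ih M' h1 hM2).trans
            (Finset.sum_le_sum_of_subset (Finset.range_subset_range.mpr (by omega)))
        · push_neg at hM2
          have hkl : 2^(k+l) ≤ M' := le_of_lt hM2
          have htr : (‖s M' - s (2^k)‖₊ : ℝ≥0∞)
              ≤ (‖s M' - s (2^(k+l))‖₊ : ℝ≥0∞) + (‖s (2^(k+l)) - s (2^k)‖₊ : ℝ≥0∞) := by
            have heq2 : s M' - s (2^k) = (s M' - s (2^(k+l))) + (s (2^(k+l)) - s (2^k)) := by
              ring
            rw [heq2]
            exact_mod_cast nnnorm_add_le _ _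
          have hfirst : (‖s M' - s (2^(k+l))‖₊ : ℝ≥0∞) ≤ GkF c (k+l) z := by
            rw [hsD _ _ hkl, hGk]
            have hp : (2:ℕ)^(k+(l+1)) = 2^(k+l)+2^(k+l) := by
              rw [← add_assoc, pow_succ, mul_two]
            have hmem : M' - 2^(k+l) ∈ Finset.range (2^(k+l)+1) :=
              Finset.mem_range.mpr (by omega)
            exact Finset.le_sup (f := fun j => Dfun c (2^(k+l)+1) j z) hmem
          have hsecond := ih (2^(k+l)) (Nat.pow_le_pow_right (by norm_num) (by omega)) le_rfl
          calc (‖s M' - s (2^k)‖₊ : ℝ≥0∞)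
              ≤ (‖s M' - s (2^(k+l))‖₊ : ℝ≥0∞) + (‖s (2^(k+l)) - s (2^k)‖₊ : ℝ≥0∞) := htr
            _ ≤ GkF c (k+l) z + ∑ i ∈ Finset.range l, GkF c (i+k) z := add_le_add hfirst hsecond
            _ = ∑ i ∈ Finset.range (l+1), GkF c (i+k) z := by
                rw [Finset.sum_range_succ, add_comm l k]
                ring
    have hQM := hQ M M hM (le_trans (le_of_lt (Nat.lt_two_pow_self (n := M)))
      (Nat.pow_le_pow_right (by norm_num) (by omega)))
    exact hQM.trans (ENNReal.sum_le_tsum _)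
  have hlog : Tendsto (fun M : ℕ => Nat.log 2 M) atTop atTop := by
    apply tendsto_atTop_atTop.mpr
    intro b
    refine ⟨2^b, fun M hM => ?_⟩
    have h1 : (1:ℕ) ≤ 2^b := Nat.one_le_two_pow
    exact (Nat.le_log_iff_pow_le one_lt_two (by omega)).mpr hM
  have hylog : Tendsto (fun M => y (Nat.log 2 M)) atTop (𝓝 L) := hL.comp hlog
  have htailtop : ∀ k, tail k ≠ ⊤ := fun k => ne_top_of_le_ne_top hz.ne (htail_le k)
  have hdiff : Tendsto (fun M => s M - y (Nat.log 2 M)) atTop (𝓝 0) := by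
    rw [tendsto_zero_iff_norm_tendsto_zero]
    apply squeeze_zero' (Eventually.of_forall fun M => norm_nonneg _)
      (g := fun M => (tail (Nat.log 2 M)).toReal)
    · filter_upwards [eventually_ge_atTop 1] with M hM
      have h2k : 2^(Nat.log 2 M) ≤ M := Nat.pow_log_le_self 2 (by omega)
      have h1 := hgap (Nat.log 2 M) M h2k
      calc ‖s M - y (Nat.log 2 M)‖
          = ((‖s M - y (Nat.log 2 M)‖₊ : ℝ≥0∞)).toReal := by simp
        _ ≤ (tail (Nat.log 2 M)).toReal := ENNReal.toReal_mono (htailtop _) h1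
    · have h1 : Tendsto (fun k => (tail k).toReal) atTop (𝓝 0) := by
        have := (ENNReal.tendsto_toReal (by simp : (0:ℝ≥0∞) ≠ ⊤)).comp htail0
        simpa [Function.comp_def] using this
      exact h1.comp hlog
  refine ⟨L, ?_⟩
  have hfinal : Tendsto s atTop (𝓝 L) := by
    have h2 := hdiff.add hylog
    rw [zero_add] at h2
    apply h2.congr
    intro M
    ring
  apply hfinal.congr
  intro N
  have hIco : Finset.Ico 1 (N+1) = Finset.Icc 1 N := Finset.ext fun x => by
    simp [Nat.lt_succ_iff]
  simp only [hsdef, hIco]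


set_option maxHeartbeats 1000000 in
lemma ae_conv_at_sigma (a : ℕ → ℂ) (ha : Summable fun n => ‖a n‖^2) (σ : ℝ) (hσ : 0 < σ) :
    ∀ᵐ z ∂haarT, ∃ L : ℂ,
      Tendsto (fun N : ℕ => ∑ n ∈ Finset.Icc 1 N, (a n * (n:ℂ)^(-(σ:ℂ))) * chiz z n)
        atTop (𝓝 L) := by
  set c : ℕ → ℂ := fun n => a n * (n:ℂ)^(-(σ:ℂ)) with hc
  have hGk : GkF c = fun k z => (Finset.range (2^k+1)).sup fun j => Dfun c (2^k+1) j z := rfl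
  have measGk : ∀ k, Measurable (GkF c k) := fun k => measurable_supD c _ _
  set ε : ℕ → ℝ := fun k => ∑ n ∈ Finset.Ico (2^k+1) (2^k+1+2^k), ‖c n‖^2 with hε
  have hεnn : ∀ k, 0 ≤ ε k := fun k => Finset.sum_nonneg fun n _ => sq_nonneg _
  have hmax : ∀ k, (∫⁻ z, (GkF c k z)^(2:ℝ) ∂haarT)^(1/2:ℝ)
      ≤ ((k:ℝ≥0∞)+1) * ENNReal.ofReal (ε k)^(1/2:ℝ) :=
    fun k => maximal_ineq c k (2^k+1) (Nat.le_add_left 1 _)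
  have hL1 : ∀ k, ∫⁻ z, GkF c k z ∂haarT ≤ (∫⁻ z, (GkF c k z)^(2:ℝ) ∂haarT)^(1/2:ℝ) := by
    intro k
    have hconj : Real.HolderConjugate 2 2 := Real.HolderConjugate.two_two
    have h := ENNReal.lintegral_mul_le_Lp_mul_Lq haarT hconj (measGk k).aemeasurable
      (aemeasurable_const (b := (1:ℝ≥0∞)))
    simp only [Pi.mul_apply, mul_one, ENNReal.one_rpow, lintegral_one, measure_univ,
      ENNReal.one_rpow] at h
    simpa using h
  have hL1b : ∀ k, ∫⁻ z, GkF c k z ∂haarT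
      ≤ ENNReal.ofReal (((k:ℝ)+1)^4 * ε k + 1/((k:ℝ)+1)^2) := by
    intro k
    refine (hL1 k).trans ((hmax k).trans ?_)
    have hcast : ENNReal.ofReal ((k:ℝ)+1) = (k:ℝ≥0∞)+1 := by
      rw [ENNReal.ofReal_add (by positivity) zero_le_one, ENNReal.ofReal_natCast,
        ENNReal.ofReal_one]
    have h1 : ((k:ℝ≥0∞)+1) * ENNReal.ofReal (ε k)^(1/2:ℝ)
        = ENNReal.ofReal (((k:ℝ)+1) * (ε k)^(1/2:ℝ)) := by
      rw [ENNReal.ofReal_mul (by positivity), ENNReal.ofReal_rpow_of_nonneg (hεnn k) (by norm_num),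
        hcast]
    rw [h1]
    apply ENNReal.ofReal_le_ofReal
    set s := (ε k)^(1/2:ℝ) with hs
    have hs0 : 0 ≤ s := Real.rpow_nonneg (hεnn k) _
    have hs2 : s^2 = ε k := by
      rw [hs, ← Real.rpow_natCast ((ε k)^(1/2:ℝ)) 2, ← Real.rpow_mul (hεnn k)]
      norm_num
    have hk1 : (0:ℝ) < (k:ℝ)+1 := by positivity
    set v : ℝ := 1/((k:ℝ)+1) with hv
    have hveq : 1/((k:ℝ)+1)^2 = v^2 := by rw [hv]; field_simp
    rw [hveq]
    have h5 : ((k:ℝ)+1)^2 * s * v = ((k:ℝ)+1)*s := by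
      rw [hv]; field_simp
    rw [← hs2]
    nlinarith [sq_nonneg (((k:ℝ)+1)^2 * s - v), h5, mul_nonneg (le_of_lt hk1) hs0]
  -- summability of the bounds
  set T : ℕ → ℝ := fun k => ∑ n ∈ Finset.Ico (2^k+1) (2^k+1+2^k), ‖a n‖^2 with hT
  have hTnn : ∀ k, 0 ≤ T k := fun k => Finset.sum_nonneg fun n _ => sq_nonneg _
  have hTsum : Summable T := by
    apply summable_of_sum_range_le hTnn (c := ∑' n, ‖a n‖^2)
    intro K
    have hrange : ∑ k ∈ Finset.range K, T k = ∑ n ∈ Finset.Ico 2 (2^K+1), ‖a n‖^2 := by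
      induction K with
      | zero => simp
      | succ K ih =>
        rw [Finset.sum_range_succ, ih]
        have hp : (2:ℕ)^(K+1) = 2^K+2^K := by rw [pow_succ, mul_two]
        have h1 : (1:ℕ) ≤ 2^K := Nat.one_le_two_pow
        have hTK : T K = ∑ n ∈ Finset.Ico (2^K+1) (2^(K+1)+1), ‖a n‖^2 := by
          simp only [hT, show 2^K+1+2^K = 2^(K+1)+1 from by omega]
        rw [hTK]
        exact Finset.sum_Ico_consecutive _ (by omega) (by omega)
    rw [hrange]
    exact Summable.sum_le_tsum _ (fun n _ => sq_nonneg _) ha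
  set q : ℝ := (2:ℝ)^(-(2*σ)) with hq
  have hq0 : 0 < q := Real.rpow_pos_of_pos two_pos _
  have hq1 : q < 1 := Real.rpow_lt_one_of_one_lt_of_neg one_lt_two (by linarith)
  have hεq : ∀ k, ε k ≤ q^k * T k := by
    intro k
    rw [hε, hT, Finset.mul_sum]
    apply Finset.sum_le_sum
    intro n hn
    have hn1 : 2^k + 1 ≤ n := (Finset.mem_Ico.mp hn).1
    have h1k : (1:ℕ) ≤ 2^k := Nat.one_le_two_pow
    have hnp : (0:ℝ) < n := by
      have : 1 ≤ n := by omega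
      exact_mod_cast Nat.lt_of_lt_of_le Nat.zero_lt_one this
    have hcn : ‖c n‖ = ‖a n‖ * (n:ℝ)^(-σ) := by
      rw [hc, norm_mul]
      congr 1
      rw [show ((n:ℕ):ℂ) = (((n:ℕ):ℝ):ℂ) by push_cast; ring,
        Complex.norm_cpow_eq_rpow_re_of_pos hnp]
      simp
    rw [hcn, mul_pow]
    have h2 : ((n:ℝ)^(-σ))^2 = (n:ℝ)^(-(2*σ)) := by
      rw [← Real.rpow_natCast ((n:ℝ)^(-σ)) 2, ← Real.rpow_mul (le_of_lt hnp)]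
      ring_nf
    have h3 : (n:ℝ)^(-(2*σ)) ≤ (((2:ℕ)^k:ℕ):ℝ)^(-(2*σ)) := by
      apply Real.rpow_le_rpow_of_nonpos (by positivity) _ (by linarith)
      exact_mod_cast (by omega : 2^k ≤ n)
    have h4 : (((2:ℕ)^k:ℕ):ℝ)^(-(2*σ)) = q^k := by
      rw [hq]
      push_cast
      rw [← Real.rpow_natCast 2 k, ← Real.rpow_mul (by norm_num), mul_comm,
        Real.rpow_mul (by norm_num), Real.rpow_natCast]
    calc ‖a n‖^2 * ((n:ℝ)^(-σ))^2 ≤ ‖a n‖^2 * q^k := by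
          apply mul_le_mul_of_nonneg_left _ (sq_nonneg _)
          rw [h2, ← h4]
          exact h3
      _ = q^k * ‖a n‖^2 := by ring
  set u : ℕ → ℝ := fun k => ((k:ℝ)+1)^4 * q^k with hu
  have husum : Summable u := by
    have h1 : Summable (fun k : ℕ => (k:ℝ)^4 * q^k) :=
      summable_pow_mul_geometric_of_norm_lt_one 4
        (by rw [Real.norm_eq_abs, abs_of_pos hq0]; exact hq1)
    have h2 := (summable_nat_add_iff 1).mpr h1
    have h3 := h2.mul_left (1/q)
    apply h3.congr
    intro k
    rw [hu]
    push_cast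
    field_simp
    ring
  have hubd : ∀ k, u k ≤ ∑' j, u j :=
    fun k => Summable.le_tsum husum k (fun j _ => by rw [hu]; positivity)
  set Cq := ∑' j, u j with hCq
  set β : ℕ → ℝ := fun k => ((k:ℝ)+1)^4 * ε k + 1/((k:ℝ)+1)^2 with hβ
  have hβsum : Summable β := by
    apply Summable.add
    · apply Summable.of_nonneg_of_le (fun k => by positivity) (fun k => ?_) (hTsum.mul_left Cq)
      calc ((k:ℝ)+1)^4 * ε k ≤ ((k:ℝ)+1)^4 * (q^k * T k) :=
            mul_le_mul_of_nonneg_left (hεq k) (by positivity)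
        _ = u k * T k := by rw [hu]; ring
        _ ≤ Cq * T k := mul_le_mul_of_nonneg_right (hubd k) (hTnn k)
    · have h1 : Summable (fun n : ℕ => 1/(n:ℝ)^2) := Real.summable_one_div_nat_pow.mpr (by norm_num)
      have h2 := (summable_nat_add_iff 1).mpr h1
      apply h2.congr
      intro k
      push_cast
      ring
  have hβnn : ∀ k, 0 ≤ β k := fun k => by rw [hβ]; positivity
  -- total lintegral finite
  have htot : ∫⁻ z, (∑' k, GkF c k z) ∂haarT ≠ ⊤ := by
    rw [lintegral_tsum (fun k => (measGk k).aemeasurable)]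
    apply ne_top_of_le_ne_top _ (ENNReal.tsum_le_tsum (fun k => hL1b k))
    rw [← ENNReal.ofReal_tsum_of_nonneg hβnn hβsum]
    exact ENNReal.ofReal_ne_top
  have hae : ∀ᵐ z ∂haarT, (∑' k, GkF c k z) < ⊤ :=
    ae_lt_top (Measurable.ennreal_tsum measGk) htot
  filter_upwards [hae] with z hz
  exact pointwise_conv c z hz

lemma cpow_diff_bound (w : ℂ) (hw : 0 < w.re) (n : ℕ) (hn : 1 ≤ n) :
    ‖((n:ℂ)+1)^(-w) - (n:ℂ)^(-w)‖ ≤ ‖w‖ * (n:ℝ)^(-w.re-1) := by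
  have hw0 : w ≠ 0 := fun h => by simp [h] at hw
  set φ : ℝ → ℂ := fun t => (t:ℂ)^(-w) with hφ
  set φ' : ℝ → ℂ := fun t => -w * (t:ℂ)^(-w-1) with hφ'
  have hderiv : ∀ x ∈ Set.Icc (n:ℝ) ((n:ℝ)+1), HasDerivWithinAt φ (φ' x) (Set.Icc (n:ℝ) ((n:ℝ)+1)) x := by
    intro x hx
    have hx0 : x ≠ 0 := by
      have : (1:ℝ) ≤ x := le_trans (by exact_mod_cast hn) hx.1
      linarith
    have hr : -w - 1 ≠ -1 := by
      intro h
      apply hw0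
      have : -w = 0 := by linear_combination h
      linear_combination -this
    have h1 := hasDerivAt_ofReal_cpow_const' hx0 hr
    have h2 : HasDerivAt (fun t : ℝ => -w * ((t:ℂ)^(-w-1+1) / (-w-1+1))) (-w * (x:ℂ)^(-w-1)) x :=
      h1.const_mul (-w)
    have h3 : (fun t : ℝ => -w * ((t:ℂ)^(-w-1+1) / (-w-1+1))) = φ := by
      funext t
      have : -w - 1 + 1 = -w := by ring
      rw [this, hφ]
      field_simp
    rw [h3] at h2
    exact h2.hasDerivWithinAt
  have hbound : ∀ x ∈ Set.Ico (n:ℝ) ((n:ℝ)+1), ‖φ' x‖ ≤ ‖w‖ * (n:ℝ)^(-w.re-1) := by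
    intro x hx
    have hn0 : (0:ℝ) < n := by exact_mod_cast hn
    have hx1 : (n:ℝ) ≤ x := hx.1
    rw [hφ']
    rw [norm_mul, norm_neg]
    apply mul_le_mul_of_nonneg_left _ (norm_nonneg w)
    have habs : ‖(x:ℂ)^(-w-1)‖ = x ^ ((-w-1).re) := by
      rw [Complex.norm_cpow_eq_rpow_re_of_pos (lt_of_lt_of_le hn0 hx1)]
    rw [habs]
    have hre : (-w-1).re = -w.re - 1 := by simp
    rw [hre]
    exact Real.rpow_le_rpow_of_nonpos hn0 hx1 (by linarith)
  have := norm_image_sub_le_of_norm_deriv_le_segment' hderiv hbound ((n:ℝ)+1)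
    (Set.right_mem_Icc.mpr (by linarith))
  simp only [hφ] at this
  have heq : ((n:ℝ)+1) - (n:ℝ) = 1 := by ring
  rw [heq, mul_one] at this
  convert this using 3 <;> push_cast <;> rfl

lemma abel_conv (d : ℕ → ℂ) (L : ℂ)
    (hd : Tendsto (fun N : ℕ => ∑ n ∈ Finset.Icc 1 N, d n) atTop (𝓝 L))
    (w : ℂ) (hw : 0 < w.re) :
    ∃ L' : ℂ, Tendsto (fun N : ℕ => ∑ n ∈ Finset.Icc 1 N, d n * (n:ℂ)^(-w)) atTop (𝓝 L') := by
  set f : ℕ → ℂ := fun i => ((1+i:ℕ):ℂ)^(-w) with hf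
  set g : ℕ → ℂ := fun i => d (1+i) with hg
  set G : ℕ → ℂ := fun m => ∑ i ∈ Finset.range m, g i with hG
  have hGeq : ∀ m : ℕ, G m = ∑ n ∈ Finset.Icc 1 m, d n := by
    intro m
    rw [hG, ← Finset.Ico_add_one_right_eq_Icc, Finset.sum_Ico_eq_sum_range]
    simp [hg]
  have hGL : Tendsto G atTop (𝓝 L) := by
    apply hd.congr
    intro N
    exact (hGeq N).symm
  have key : ∀ N : ℕ, ∑ n ∈ Finset.Icc 1 N, d n * (n:ℂ)^(-w)
      = f (N-1) * G N - ∑ i ∈ Finset.range (N-1), (f (i+1) - f i) * G (i+1) := by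
    intro N
    have h1 : ∑ n ∈ Finset.Icc 1 N, d n * (n:ℂ)^(-w)
        = ∑ i ∈ Finset.range N, f i • g i := by
      rw [← Finset.Ico_add_one_right_eq_Icc, Finset.sum_Ico_eq_sum_range]
      simp only [Nat.add_sub_cancel, smul_eq_mul]
      apply Finset.sum_congr rfl
      intro i _
      rw [hf, hg]
      push_cast
      ring
    rw [h1, Finset.sum_range_by_parts f g N]
    simp [smul_eq_mul, hG]
  -- bound on G
  obtain ⟨Cg, hCg⟩ : ∃ C : ℝ, ∀ m, ‖G m‖ ≤ C := by
    have hb := (hGL.norm).bddAbove_range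
    obtain ⟨C, hC⟩ := hb
    exact ⟨C, fun m => hC (Set.mem_range_self m)⟩
  -- the series
  set u : ℕ → ℂ := fun i => (f (i+1) - f i) * G (i+1) with hu
  have hsummable : Summable u := by
    apply Summable.of_norm_bounded (g := fun i => (‖w‖ * ((1+i:ℕ):ℝ)^(-w.re-1)) * Cg)
    · apply Summable.mul_right
      apply Summable.mul_left
      have h0 : Summable (fun n : ℕ => (n:ℝ)^(-w.re-1)) :=
        Real.summable_nat_rpow.mpr (by linarith)
      have := (summable_nat_add_iff 1).mpr h0
      apply this.congr
      intro i
      congr 1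
      push_cast
      ring
    · intro i
      rw [hu, norm_mul]
      have hCg0 : 0 ≤ Cg := le_trans (norm_nonneg _) (hCg 0)
      apply mul_le_mul _ (hCg (i+1)) (norm_nonneg _)
        (mul_nonneg (norm_nonneg w) (Real.rpow_nonneg (by positivity) _))
      have := cpow_diff_bound w hw (1+i) (by omega)
      have heq1 : f (i+1) = ((1+i:ℕ):ℂ) ^ (-w) + (((1+i:ℕ):ℂ)+1)^(-w) - ((1+i:ℕ):ℂ)^(-w) := by
        rw [hf]; push_cast; ring_nf
      calc ‖f (i+1) - f i‖ = ‖(((1+i:ℕ):ℂ)+1)^(-w) - ((1+i:ℕ):ℂ)^(-w)‖ := by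
            rw [hf]
            congr 2
            push_cast
            ring_nf
        _ ≤ ‖w‖ * ((1+i:ℕ):ℝ)^(-w.re-1) := this
  have hterm2 : Tendsto (fun N : ℕ => ∑ i ∈ Finset.range (N-1), u i) atTop (𝓝 (∑' i, u i)) :=
    (hsummable.hasSum.tendsto_sum_nat).comp (tendsto_sub_atTop_nat 1)
  have hf0 : Tendsto (fun N : ℕ => f (N-1)) atTop (𝓝 0) := by
    rw [tendsto_zero_iff_norm_tendsto_zero]
    have hnorm : ∀ N : ℕ, ‖f (N-1)‖ = ((1+(N-1):ℕ):ℝ)^(-w.re) := by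
      intro N
      simp only [hf]
      have : ((1+(N-1):ℕ):ℂ) = (((1+(N-1):ℕ):ℝ):ℂ) := by push_cast; ring
      rw [this, Complex.norm_cpow_eq_rpow_re_of_pos (by positivity)]
      simp
    simp only [hnorm]
    have hmain : Tendsto (fun m : ℕ => ((m:ℝ))^(-w.re)) atTop (𝓝 0) :=
      (tendsto_rpow_neg_atTop hw).comp tendsto_natCast_atTop_atTop
    have hcomp : Tendsto (fun N : ℕ => (1+(N-1):ℕ)) atTop atTop := by
      apply tendsto_atTop_atTop.mpr
      intro b
      exact ⟨b, fun a ha => by omega⟩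
    exact hmain.comp hcomp
  refine ⟨0 * L - ∑' i, u i, ?_⟩
  have := (hf0.mul hGL).sub hterm2
  apply this.congr
  intro N
  exact (key N).symm


/-- **Helson's theorem.** If `(a_n)_{n ≥ 1}` is square-summable, then for almost every
`z ∈ 𝕋^∞` the Dirichlet series `∑ a_n χ_z(n) n^{-s}` converges for every `s` with `Re s > 0`. -/
theorem helson_theorem (a : ℕ → ℂ) (ha : Summable fun n => ‖a n‖ ^ 2) :
    ∀ᵐ z ∂haarT, ∀ s : ℂ, 0 < s.re →
      ∃ L : ℂ, Tendsto (fun N : ℕ => ∑ n ∈ Finset.Icc 1 N, a n * chiz z n * (n : ℂ) ^ (-s))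
        atTop (𝓝 L) := by
  have hae : ∀ᵐ z ∂haarT, ∀ j : ℕ, ∃ L : ℂ,
      Tendsto (fun N : ℕ => ∑ n ∈ Finset.Icc 1 N,
        (a n * (n:ℂ)^(-((1/((j:ℝ)+1) : ℝ):ℂ))) * chiz z n) atTop (𝓝 L) := by
    rw [ae_all_iff]
    intro j
    exact ae_conv_at_sigma a ha (1/((j:ℝ)+1)) (by positivity)
  filter_upwards [hae] with z hz
  intro w hw
  obtain ⟨j, hj⟩ := exists_nat_one_div_lt hw
  obtain ⟨L, hL⟩ := hz j
  set σ : ℝ := 1/((j:ℝ)+1) with hσdef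
  have hwre : 0 < (w - (σ:ℂ)).re := by
    rw [Complex.sub_re, Complex.ofReal_re]
    have : σ < w.re := hj
    linarith
  obtain ⟨L', hL'⟩ := abel_conv (fun n => (a n * (n:ℂ)^(-(σ:ℂ))) * chiz z n) L hL
    (w - (σ:ℂ)) hwre
  refine ⟨L', ?_⟩
  apply hL'.congr
  intro N
  apply Finset.sum_congr rfl
  intro n hn
  have hn1 : 1 ≤ n := (Finset.mem_Icc.mp hn).1
  have hne : ((n:ℕ):ℂ) ≠ 0 := Nat.cast_ne_zero.mpr (by omega)
  have hcpow : (n:ℂ)^(-(σ:ℂ)) * (n:ℂ)^(-(w - (σ:ℂ))) = (n:ℂ)^(-w) := by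
    rw [← Complex.cpow_add _ _ hne]
    congr 1
    ring
  calc (a n * (n:ℂ)^(-(σ:ℂ)) * chiz z n) * (n:ℂ)^(-(w - (σ:ℂ)))
      = a n * chiz z n * ((n:ℂ)^(-(σ:ℂ)) * (n:ℂ)^(-(w - (σ:ℂ)))) := by ring
    _ = a n * chiz z n * (n:ℂ)^(-w) := by rw [hcpow]
end
end

section
/- For every u > 0 there is a constant C = C(u) > 0 such that for every sequence (a_n)_{n≥1} of complex numbers with ∑_{n=1}^∞ |a_n|² < ∞ one has (∫_{𝕋^∞} sup_{N∈ℕ} |∑_{n=1}^N a_n n^{−u} χ_z(n)|² dm(z))^{1/2} ≤ C (∑_{n=1}^∞ |a_n|²)^{1/2}. -/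
open MeasureTheory Filter Topology Finset
open scoped ENNReal NNReal

noncomputable section

lemma ofReal_norm_eq_coe_nnnorm {E : Type*} [SeminormedAddCommGroup E] (c : E) :
    ENNReal.ofReal ‖c‖ = (‖c‖₊ : ℝ≥0∞) := by
  rw [← coe_nnnorm]; exact ENNReal.ofReal_coe_nnreal

instance : Measure.IsMulLeftInvariant haarT := by unfold haarT; infer_instance
instance inst_s4 : IsProbabilityMeasure haarT := by
  constructor; rw [haarT]
  exact Measure.haarMeasure_self (K₀ := ⟨⟨Set.univ, isCompact_univ⟩, by simp⟩)

lemma norm_chiz (z : TorusInf) (n : ℕ) : ‖chiz z n‖ = 1 := by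
  unfold chiz
  rw [norm_prod]
  refine Finset.prod_eq_one fun p _ => ?_
  rw [norm_pow]
  exact (congrArg (· ^ _) (Circle.norm_coe _)).trans (one_pow _)

lemma chiz_mul (w z : TorusInf) (n : ℕ) : chiz (w * z) n = chiz w n * chiz z n := by
  unfold chiz
  rw [← Finset.prod_mul_distrib]
  refine Finset.prod_congr rfl fun p _ => ?_
  rw [← mul_pow]; norm_cast

lemma chiz_update {p : ℕ} (hp : p.Prime) (ζ : Circle) (n : ℕ) :
    chiz (Function.update (1 : TorusInf) (Nat.count Nat.Prime p) ζ) n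
      = (ζ : ℂ) ^ (n.factorization p) := by
  unfold chiz
  by_cases hmem : p ∈ n.primeFactors
  · rw [Finset.prod_eq_single_of_mem p hmem]
    · rw [Function.update_self]
    · intro q hq hqp
      have hq' : Nat.Prime q := Nat.prime_of_mem_primeFactors hq
      rw [Function.update_of_ne, Pi.one_apply, Circle.coe_one, one_pow]
      exact fun h => hqp (by rw [← Nat.nth_count hq', h, Nat.nth_count hp])
  · have he : n.factorization p = 0 := by
      rwa [← Nat.support_factorization, Finsupp.notMem_support_iff] at hmem
    rw [he, pow_zero]
    refine Finset.prod_eq_one fun q hq => ?_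
    have : q ≠ p := fun h => hmem (h ▸ hq)
    rw [Function.update_of_ne, Pi.one_apply, Circle.coe_one, one_pow]
    exact fun h => this
      (by rw [← Nat.nth_count (Nat.prime_of_mem_primeFactors hq), h, Nat.nth_count hp])

lemma chiz_orth {n m : ℕ} (hn : n ≠ 0) (hm : m ≠ 0) (hnm : n ≠ m) :
    ∫ z, chiz z n * (starRingEnd ℂ) (chiz z m) ∂haarT = 0 := by
  have hfac : n.factorization ≠ m.factorization := by
    intro h
    exact hnm (Nat.factorization_inj (by simpa using hn) (by simpa using hm) h)
  obtain ⟨p, hpne⟩ : ∃ p, n.factorization p ≠ m.factorization p := by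
    by_contra h
    push_neg at h
    exact hfac (Finsupp.ext h)
  have hp : p.Prime := by
    rcases Nat.eq_zero_or_pos (n.factorization p) with h0 | hpos
    · have : m.factorization p ≠ 0 := by rw [h0] at hpne; exact fun h => hpne h.symm
      exact Nat.prime_of_mem_primeFactors
        (by rwa [← Nat.support_factorization, Finsupp.mem_support_iff])
    · exact Nat.prime_of_mem_primeFactors
        (by rw [← Nat.support_factorization, Finsupp.mem_support_iff]; exact hpos.ne')
  set e₁ := n.factorization p
  set e₂ := m.factorization p
  set d : ℤ := (e₁ : ℤ) - (e₂ : ℤ) with hd_def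
  have hd : d ≠ 0 := by
    simp only [hd_def, sub_ne_zero]
    exact_mod_cast hpne
  have hdR : (d : ℝ) ≠ 0 := Int.cast_ne_zero.mpr hd
  set ζ : Circle := Circle.exp (Real.pi / (d : ℝ)) with hζ
  set w : TorusInf := Function.update (1 : TorusInf) (Nat.count Nat.Prime p) ζ with hw
  have hφw : chiz w n * (starRingEnd ℂ) (chiz w m) = -1 := by
    rw [hw, chiz_update hp, chiz_update hp]
    have hζne : (ζ : ℂ) ≠ 0 := Circle.coe_ne_zero ζ
    rw [map_pow, ← Circle.coe_inv_eq_conj, ← zpow_natCast ((ζ : ℂ)) e₁]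
    rw [Circle.coe_inv]
    rw [← zpow_natCast ((ζ : ℂ)⁻¹) e₂, inv_zpow, ← zpow_neg, ← zpow_add₀ hζne]
    have : (e₁ : ℤ) + -(e₂ : ℤ) = d := by rw [hd_def]; ring
    rw [this, hζ, Circle.coe_exp, ← Complex.exp_int_mul]
    have hdC : (d : ℂ) ≠ 0 := Int.cast_ne_zero.mpr hd
    have : (d : ℂ) * ((Real.pi / (d : ℝ) : ℝ) * Complex.I) = Real.pi * Complex.I := by
      push_cast
      field_simp
    rw [this, Complex.exp_pi_mul_I]
  have hinv : ∫ z, chiz (w * z) n * (starRingEnd ℂ) (chiz (w * z) m) ∂haarT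
      = ∫ z, chiz z n * (starRingEnd ℂ) (chiz z m) ∂haarT :=
    integral_mul_left_eq_self (fun z => chiz z n * (starRingEnd ℂ) (chiz z m)) w
  have heq : ∫ z, chiz (w * z) n * (starRingEnd ℂ) (chiz (w * z) m) ∂haarT
      = -∫ z, chiz z n * (starRingEnd ℂ) (chiz z m) ∂haarT := by
    have : ∀ z, chiz (w * z) n * (starRingEnd ℂ) (chiz (w * z) m)
        = -1 * (chiz z n * (starRingEnd ℂ) (chiz z m)) := by
      intro z
      rw [chiz_mul, chiz_mul, map_mul]
      rw [show chiz w n * chiz z n * ((starRingEnd ℂ) (chiz w m) * (starRingEnd ℂ) (chiz z m))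
          = (chiz w n * (starRingEnd ℂ) (chiz w m)) * (chiz z n * (starRingEnd ℂ) (chiz z m))
          from by ring, hφw]
    simp_rw [this]
    rw [integral_const_mul]
    ring
  rw [hinv] at heq
  have h2 : (2 : ℂ) * ∫ z, chiz z n * (starRingEnd ℂ) (chiz z m) ∂haarT = 0 := by
    linear_combination heq
  have := mul_eq_zero.mp h2
  simpa using this

lemma integrable_cont {E : Type*} [NormedAddCommGroup E] {f : TorusInf → E}
    (hf : Continuous f) : Integrable f haarT :=
  hf.integrable_of_hasCompactSupport (isClosed_tsupport f).isCompact

section params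
variable (u : ℝ) (a : ℕ → ℂ)

/-- the coefficient -/
def bb (n : ℕ) : ℂ := a n * (((n : ℝ) ^ (-u) : ℝ) : ℂ)

/-- the summand -/
def FF (n : ℕ) (z : TorusInf) : ℂ := bb u a n * chiz z n

lemma FF_eq (n : ℕ) (z : TorusInf) :
    a n * (((n : ℝ) ^ (-u) : ℝ) : ℂ) * chiz z n = FF u a n z := rfl

def wb (n : ℕ) : ℝ≥0∞ := (‖bb u a n‖₊ : ℝ≥0∞) ^ 2

lemma continuous_FFsum (t : Finset ℕ) : Continuous fun z => ∑ n ∈ t, FF u a n z :=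
  continuous_finset_sum _ fun n _ => (continuous_const.mul (continuous_chiz n))

lemma measurable_nnormsum (t : Finset ℕ) :
    Measurable fun z => ((‖∑ n ∈ t, FF u a n z‖₊ : ℝ≥0∞)) :=
  ((continuous_FFsum u a t).nnnorm.measurable).coe_nnreal_ennreal

lemma FF_pair (ha0 : a 0 = 0) {n m : ℕ} (hnm : n ≠ m) :
    ∫ z, FF u a n z * (starRingEnd ℂ) (FF u a m z) ∂haarT = 0 := by
  rcases eq_or_ne n 0 with rfl | hn
  · simp [FF, bb, ha0]
  rcases eq_or_ne m 0 with rfl | hm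
  · simp [FF, bb, ha0]
  have : ∀ z, FF u a n z * (starRingEnd ℂ) (FF u a m z)
      = (bb u a n * (starRingEnd ℂ) (bb u a m)) * (chiz z n * (starRingEnd ℂ) (chiz z m)) := by
    intro z; simp only [FF, map_mul]; ring
  simp_rw [this]
  rw [integral_const_mul, chiz_orth hn hm hnm, mul_zero]

lemma FF_diag (n : ℕ) :
    ∫ z, FF u a n z * (starRingEnd ℂ) (FF u a n z) ∂haarT = ((‖bb u a n‖ ^ 2 : ℝ) : ℂ) := by
  have : ∀ z, FF u a n z * (starRingEnd ℂ) (FF u a n z) = ((‖bb u a n‖ ^ 2 : ℝ) : ℂ) := by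
    intro z
    rw [FF, Complex.mul_conj, Complex.normSq_mul]
    have h1 : Complex.normSq (chiz z n) = 1 := by
      rw [Complex.normSq_eq_norm_sq, norm_chiz]; norm_num
    rw [h1, mul_one, Complex.normSq_eq_norm_sq]
  simp_rw [this]
  simp

lemma orthO (ha0 : a 0 = 0) (t : Finset ℕ) :
    ∫⁻ z, ((‖∑ n ∈ t, FF u a n z‖₊ : ℝ≥0∞)) ^ 2 ∂haarT = ∑ n ∈ t, wb u a n := by
  have hcont := continuous_FFsum u a t
  have hpt : ∀ c : ℂ, ((‖c‖₊ : ℝ≥0∞)) ^ 2 = ENNReal.ofReal (‖c‖ ^ 2) := by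
    intro c
    rw [ENNReal.ofReal_pow (norm_nonneg c), ofReal_norm_eq_coe_nnnorm]
  simp_rw [hpt]
  rw [← MeasureTheory.ofReal_integral_eq_lintegral_ofReal
      (integrable_cont (f := fun z => ‖∑ n ∈ t, FF u a n z‖ ^ 2) (hcont.norm.pow 2))
      (Filter.Eventually.of_forall fun z => by positivity)]
  have hgsq : ∀ z, ‖∑ n ∈ t, FF u a n z‖ ^ 2
      = ((∑ n ∈ t, FF u a n z) * (starRingEnd ℂ) (∑ n ∈ t, FF u a n z)).re := by
    intro z
    rw [Complex.mul_conj, Complex.normSq_eq_norm_sq]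
    exact (Complex.ofReal_re _).symm
  simp_rw [hgsq]
  have hint : Integrable (fun z => (∑ n ∈ t, FF u a n z) *
      (starRingEnd ℂ) (∑ n ∈ t, FF u a n z)) haarT :=
    integrable_cont (hcont.mul (Complex.continuous_conj.comp hcont))
  have hre := integral_re (𝕜 := ℂ) hint
  simp only [RCLike.re_to_complex] at hre
  rw [hre]
  have hexp : ∫ z, (∑ n ∈ t, FF u a n z) * (starRingEnd ℂ) (∑ n ∈ t, FF u a n z) ∂haarT
      = ∑ n ∈ t, ((‖bb u a n‖ ^ 2 : ℝ) : ℂ) := by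
    have : ∀ z, (∑ n ∈ t, FF u a n z) * (starRingEnd ℂ) (∑ n ∈ t, FF u a n z)
        = ∑ n ∈ t, ∑ m ∈ t, FF u a n z * (starRingEnd ℂ) (FF u a m z) := by
      intro z
      rw [map_sum, Finset.sum_mul_sum]
    simp_rw [this]
    rw [MeasureTheory.integral_finset_sum t (fun n _ => ?_)]
    · refine Finset.sum_congr rfl fun n hn => ?_
      rw [MeasureTheory.integral_finset_sum t (fun m _ => ?_)]
      · rw [Finset.sum_eq_single_of_mem n hn (fun m _ hmn => FF_pair u a ha0 (Ne.symm hmn))]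
        exact FF_diag u a n
      · exact integrable_cont ((continuous_const.mul (continuous_chiz n)).mul
          (Complex.continuous_conj.comp (continuous_const.mul (continuous_chiz m))))
    · exact integrable_cont (continuous_finset_sum _ fun m _ =>
        ((continuous_const.mul (continuous_chiz n)).mul
          (Complex.continuous_conj.comp (continuous_const.mul (continuous_chiz m)))))
  rw [hexp]
  have : (∑ n ∈ t, ((‖bb u a n‖ ^ 2 : ℝ) : ℂ)).re = ∑ n ∈ t, ‖bb u a n‖ ^ 2 := by
    simp [← Complex.ofReal_pow]
  rw [this, ENNReal.ofReal_sum_of_nonneg (fun n _ => by positivity)]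
  refine Finset.sum_congr rfl fun n _ => ?_
  rw [wb, hpt]

end params

/-! ## L² machinery over `haarT` -/

def lam (g : TorusInf → ℝ≥0∞) : ℝ≥0∞ := (∫⁻ z, g z ^ 2 ∂haarT) ^ (1/2 : ℝ)

lemma rpow_half_sq (x : ℝ≥0∞) : (x ^ (2:ℕ)) ^ (1/2:ℝ) = x := by
  rw [← ENNReal.rpow_natCast x 2, ← ENNReal.rpow_mul]; norm_num

lemma sq_rpow_half (x : ℝ≥0∞) : (x ^ (1/2:ℝ)) ^ (2:ℕ) = x := by
  rw [← ENNReal.rpow_natCast _ 2, ← ENNReal.rpow_mul]; norm_num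

lemma lam_mono {g h : TorusInf → ℝ≥0∞} (hgh : ∀ z, g z ≤ h z) : lam g ≤ lam h :=
  ENNReal.rpow_le_rpow (lintegral_mono fun z => pow_le_pow_left' (hgh z) 2) (by norm_num)

lemma lam_add {g h : TorusInf → ℝ≥0∞} (hg : Measurable g) (hh : Measurable h) :
    lam (fun z => g z + h z) ≤ lam g + lam h := by
  unfold lam
  have e : ∀ x : ℝ≥0∞, x ^ (2:ℕ) = x ^ (2:ℝ) := fun x => by
    rw [← ENNReal.rpow_natCast x 2]; norm_num
  simp_rw [e]
  exact ENNReal.lintegral_Lp_add_le hg.aemeasurable hh.aemeasurable one_le_two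

lemma lam_max {g h : TorusInf → ℝ≥0∞} (hg : Measurable g) (hh : Measurable h) :
    lam (fun z => max (g z) (h z)) ≤ (lam g ^ 2 + lam h ^ 2) ^ (1/2:ℝ) := by
  unfold lam
  rw [sq_rpow_half, sq_rpow_half]
  refine ENNReal.rpow_le_rpow ?_ (by norm_num)
  calc ∫⁻ z, (max (g z) (h z)) ^ 2 ∂haarT
      ≤ ∫⁻ z, (g z ^ 2 + h z ^ 2) ∂haarT := by
        refine lintegral_mono fun z => ?_
        rcases max_cases (g z) (h z) with ⟨hm, _⟩ | ⟨hm, _⟩ <;> rw [hm]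
        · exact le_self_add
        · exact le_add_self
    _ = _ := lintegral_add_left (hg.pow_const 2) _

lemma sq_iSup_of_monotone {x : ℕ → ℝ≥0∞} (hx : Monotone x) :
    (⨆ n, x n) ^ (2:ℕ) = ⨆ n, x n ^ (2:ℕ) := by
  refine le_antisymm ?_ (iSup_le fun n => pow_le_pow_left' (le_iSup x n) 2)
  rw [pow_two, ENNReal.iSup_mul]
  refine iSup_le fun n => ?_
  rw [ENNReal.mul_iSup]
  refine iSup_le fun m => ?_
  calc x n * x m ≤ x (max n m) * x (max n m) :=
        mul_le_mul' (hx (le_max_left n m)) (hx (le_max_right n m))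
    _ = x (max n m) ^ (2:ℕ) := (pow_two _).symm
    _ ≤ ⨆ k, x k ^ (2:ℕ) := le_iSup (fun k => x k ^ (2:ℕ)) (max n m)

lemma lam_tsum {g : ℕ → TorusInf → ℝ≥0∞} (hg : ∀ k, Measurable (g k)) :
    lam (fun z => ∑' k, g k z) ≤ ∑' k, lam (g k) := by
  have hmeas : ∀ n : ℕ, Measurable fun z => ∑ k ∈ Finset.range n, g k z :=
    fun n => Finset.measurable_sum _ fun k _ => hg k
  have hfin : ∀ n : ℕ, lam (fun z => ∑ k ∈ Finset.range n, g k z)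
      ≤ ∑ k ∈ Finset.range n, lam (g k) := by
    intro n
    induction n with
    | zero => simp [lam]
    | succ n ih =>
      have he : (fun z => ∑ k ∈ Finset.range (n+1), g k z)
          = fun z => (∑ k ∈ Finset.range n, g k z) + g n z := by
        funext z; rw [Finset.sum_range_succ]
      rw [he, Finset.sum_range_succ]
      exact le_trans (lam_add (hmeas n) (hg n)) (add_le_add_left ih _)
  have hmono : ∀ z, Monotone fun n => ∑ k ∈ Finset.range n, g k z := fun z i j hij =>
    Finset.sum_le_sum_of_subset (Finset.range_subset_range.mpr hij)
  unfold lam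
  have hpt : ∀ z, (∑' k, g k z) ^ (2:ℕ) = ⨆ n, (∑ k ∈ Finset.range n, g k z) ^ (2:ℕ) := by
    intro z
    rw [ENNReal.tsum_eq_iSup_nat, sq_iSup_of_monotone (hmono z)]
  simp_rw [hpt]
  rw [lintegral_iSup (fun n => (hmeas n).pow_const 2)
      (fun i j hij z => pow_le_pow_left' (hmono z hij) 2)]
  have hsup : (⨆ n, ∫⁻ z, (∑ k ∈ Finset.range n, g k z) ^ 2 ∂haarT)
      ≤ (∑' k, lam (g k)) ^ (2:ℕ) := by
    refine iSup_le fun n => ?_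
    have h1 : (∫⁻ z, (∑ k ∈ Finset.range n, g k z) ^ 2 ∂haarT)
        = (lam (fun z => ∑ k ∈ Finset.range n, g k z)) ^ (2:ℕ) := by
      rw [lam, sq_rpow_half]
    rw [h1]
    refine pow_le_pow_left' (le_trans (hfin n) ?_) 2
    exact ENNReal.sum_le_tsum _
  calc (⨆ n, ∫⁻ z, (∑ k ∈ Finset.range n, g k z) ^ 2 ∂haarT) ^ (1/2:ℝ)
      ≤ ((∑' k, lam (g k)) ^ (2:ℕ)) ^ (1/2:ℝ) := ENNReal.rpow_le_rpow hsup (by norm_num)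
    _ = ∑' k, lam (g k) := rpow_half_sq _

/-! ## Rademacher–Menshov maximal estimate -/

def MRmax (u : ℝ) (a : ℕ → ℂ) (s L : ℕ) (z : TorusInf) : ℝ≥0∞ :=
  ⨆ m ∈ Finset.range (L+1), (‖∑ n ∈ Finset.Ico s (s+m), FF u a n z‖₊ : ℝ≥0∞)

lemma measurable_MRmax (u : ℝ) (a : ℕ → ℂ) (s L : ℕ) : Measurable (MRmax u a s L) :=
  Measurable.iSup fun m => Measurable.iSup fun _ => measurable_nnormsum u a _

lemma lam_nnormsum (u : ℝ) (a : ℕ → ℂ) (ha0 : a 0 = 0) (t : Finset ℕ) :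
    lam (fun z => (‖∑ n ∈ t, FF u a n z‖₊ : ℝ≥0∞)) = (∑ n ∈ t, wb u a n) ^ (1/2:ℝ) := by
  rw [lam, orthO u a ha0 t]

lemma MR (u : ℝ) (a : ℕ → ℂ) (ha0 : a 0 = 0) : ∀ (K s : ℕ),
    lam (MRmax u a s (2^K))
      ≤ ((K+1 : ℕ) : ℝ≥0∞) * (∑ n ∈ Finset.Ico s (s + 2^K), wb u a n) ^ (1/2:ℝ) := by
  intro K
  induction K with
  | zero =>
    intro s
    have hpt : ∀ z, MRmax u a s (2^0) z
        ≤ (‖∑ n ∈ Finset.Ico s (s+2^0), FF u a n z‖₊ : ℝ≥0∞) := by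
      intro z
      refine iSup₂_le fun m hm => ?_
      simp only [Finset.mem_range, pow_zero] at hm ⊢
      interval_cases m
      · simp
      · exact le_rfl
    calc lam (MRmax u a s (2^0))
        ≤ lam (fun z => (‖∑ n ∈ Finset.Ico s (s+2^0), FF u a n z‖₊ : ℝ≥0∞)) := lam_mono hpt
      _ = (∑ n ∈ Finset.Ico s (s + 2^0), wb u a n) ^ (1/2:ℝ) := lam_nnormsum u a ha0 _
      _ ≤ _ := by simp
  | succ K ih =>
    intro s
    have hp : 2^(K+1) = 2^K + 2^K := by rw [pow_succ, mul_two]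
    set A := MRmax u a s (2^K) with hA
    set B := MRmax u a (s + 2^K) (2^K) with hB
    set H := fun z => (‖∑ n ∈ Finset.Ico s (s+2^K), FF u a n z‖₊ : ℝ≥0∞) with hH
    set W1 := ∑ n ∈ Finset.Ico s (s + 2^K), wb u a n with hW1
    set W2 := ∑ n ∈ Finset.Ico (s + 2^K) (s + 2^K + 2^K), wb u a n with hW2
    set W := ∑ n ∈ Finset.Ico s (s + 2^(K+1)), wb u a n with hW
    have he2 : s + 2^(K+1) = s + 2^K + 2^K := by rw [hp, add_assoc]
    have hWsplit : W = W1 + W2 := by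
      rw [hW, hW1, hW2, he2,
        ← Finset.sum_Ico_consecutive (fun n => wb u a n) (Nat.le_add_right s (2^K))
          (Nat.le_add_right (s + 2^K) (2^K))]
    have hpt : ∀ z, MRmax u a s (2^(K+1)) z ≤ max (A z) (B z) + H z := by
      intro z
      refine iSup₂_le fun m hm => ?_
      simp only [Finset.mem_range] at hm
      by_cases hm2 : m ≤ 2^K
      · refine le_trans (le_trans ?_ (le_max_left (A z) (B z))) le_self_add
        rw [hA, MRmax]
        exact le_iSup₂ (f := fun m (_ : m ∈ Finset.range (2^K+1)) =>
          (‖∑ n ∈ Finset.Ico s (s+m), FF u a n z‖₊ : ℝ≥0∞)) m (Finset.mem_range.mpr (by omega))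
      · have hsplit : ∑ n ∈ Finset.Ico s (s+m), FF u a n z
            = (∑ n ∈ Finset.Ico s (s+2^K), FF u a n z)
              + ∑ n ∈ Finset.Ico (s+2^K) (s+m), FF u a n z :=
          (Finset.sum_Ico_consecutive _ (by omega) (by omega)).symm
        rw [hsplit]
        have htri : (‖(∑ n ∈ Finset.Ico s (s+2^K), FF u a n z)
              + ∑ n ∈ Finset.Ico (s+2^K) (s+m), FF u a n z‖₊ : ℝ≥0∞)
            ≤ (‖∑ n ∈ Finset.Ico s (s+2^K), FF u a n z‖₊ : ℝ≥0∞)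
              + (‖∑ n ∈ Finset.Ico (s+2^K) (s+m), FF u a n z‖₊ : ℝ≥0∞) := by
          exact_mod_cast nnnorm_add_le _ _
        have htri' : (‖(∑ n ∈ Finset.Ico s (s+2^K), FF u a n z)
              + ∑ n ∈ Finset.Ico (s+2^K) (s+m), FF u a n z‖₊ : ℝ≥0∞)
            ≤ H z + (‖∑ n ∈ Finset.Ico (s+2^K) (s+m), FF u a n z‖₊ : ℝ≥0∞) := htri
        refine le_trans htri' ?_
        have hsec : (‖∑ n ∈ Finset.Ico (s+2^K) (s+m), FF u a n z‖₊ : ℝ≥0∞) ≤ B z := by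
          have he : Finset.Ico (s+2^K) (s+m)
              = Finset.Ico (s+2^K) ((s+2^K) + (m - 2^K)) := by congr 1; omega
          rw [he, hB, MRmax]
          exact le_iSup₂ (f := fun m' (_ : m' ∈ Finset.range (2^K+1)) =>
            (‖∑ n ∈ Finset.Ico (s+2^K) ((s+2^K)+m'), FF u a n z‖₊ : ℝ≥0∞)) (m - 2^K)
            (Finset.mem_range.mpr (by omega))
        calc H z + (‖∑ n ∈ Finset.Ico (s+2^K) (s+m), FF u a n z‖₊ : ℝ≥0∞)
            ≤ H z + B z := add_le_add_right hsec _
          _ ≤ H z + max (A z) (B z) := add_le_add_right (le_max_right _ _) _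
          _ = max (A z) (B z) + H z := add_comm _ _
    have hlamA : lam A ≤ ((K+1 : ℕ) : ℝ≥0∞) * W1 ^ (1/2:ℝ) := ih s
    have hlamB : lam B ≤ ((K+1 : ℕ) : ℝ≥0∞) * W2 ^ (1/2:ℝ) := ih (s + 2^K)
    have hsq : ∀ (x : ℝ≥0∞) (V : ℝ≥0∞), x ≤ ((K+1 : ℕ) : ℝ≥0∞) * V ^ (1/2:ℝ) →
        x ^ (2:ℕ) ≤ ((K+1 : ℕ) : ℝ≥0∞) ^ (2:ℕ) * V := by
      intro x V hx
      calc x ^ (2:ℕ) ≤ (((K+1 : ℕ) : ℝ≥0∞) * V ^ (1/2:ℝ)) ^ (2:ℕ) := pow_le_pow_left' hx 2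
        _ = ((K+1 : ℕ) : ℝ≥0∞) ^ (2:ℕ) * V := by rw [mul_pow, sq_rpow_half]
    have hmax : lam (fun z => max (A z) (B z))
        ≤ ((K+1 : ℕ) : ℝ≥0∞) * W ^ (1/2:ℝ) := by
      refine le_trans (lam_max (measurable_MRmax u a _ _) (measurable_MRmax u a _ _)) ?_
      calc (lam A ^ 2 + lam B ^ 2) ^ (1/2:ℝ)
          ≤ (((K+1 : ℕ) : ℝ≥0∞) ^ (2:ℕ) * W1 + ((K+1 : ℕ) : ℝ≥0∞) ^ (2:ℕ) * W2) ^ (1/2:ℝ) :=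
            ENNReal.rpow_le_rpow (add_le_add (hsq _ _ hlamA) (hsq _ _ hlamB)) (by norm_num)
        _ = (((K+1 : ℕ) : ℝ≥0∞) ^ (2:ℕ) * W) ^ (1/2:ℝ) := by rw [hWsplit, mul_add]
        _ = ((K+1 : ℕ) : ℝ≥0∞) * W ^ (1/2:ℝ) := by
            rw [ENNReal.mul_rpow_of_nonneg _ _ (by norm_num : (0:ℝ) ≤ 1/2), rpow_half_sq]
    have hlamH : lam H ≤ W ^ (1/2:ℝ) := by
      rw [hH, lam_nnormsum u a ha0]
      exact ENNReal.rpow_le_rpow (by rw [hWsplit]; exact le_self_add) (by norm_num)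
    calc lam (MRmax u a s (2^(K+1)))
        ≤ lam (fun z => max (A z) (B z) + H z) := lam_mono hpt
      _ ≤ lam (fun z => max (A z) (B z)) + lam H :=
          lam_add ((measurable_MRmax u a _ _).max (measurable_MRmax u a _ _))
            (measurable_nnormsum u a _)
      _ ≤ ((K+1 : ℕ) : ℝ≥0∞) * W ^ (1/2:ℝ) + W ^ (1/2:ℝ) := add_le_add hmax hlamH
      _ = ((K+1+1 : ℕ) : ℝ≥0∞) * W ^ (1/2:ℝ) := by push_cast; ring

/-! ## Dyadic decomposition of the maximal function -/

lemma claim1 (u : ℝ) (a : ℕ → ℂ) : ∀ (K : ℕ) (z : TorusInf),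
    (‖∑ n ∈ Finset.Ico 1 (2^K), FF u a n z‖₊ : ℝ≥0∞)
      ≤ ∑ k ∈ Finset.range K, MRmax u a (2^k) (2^k) z := by
  intro K
  induction K with
  | zero => intro z; simp
  | succ K ih =>
    intro z
    have hsplit : ∑ n ∈ Finset.Ico 1 (2^(K+1)), FF u a n z
        = (∑ n ∈ Finset.Ico 1 (2^K), FF u a n z)
          + ∑ n ∈ Finset.Ico (2^K) (2^(K+1)), FF u a n z :=
      (Finset.sum_Ico_consecutive _ Nat.one_le_two_pow
        (Nat.pow_le_pow_right (by norm_num) (Nat.le_succ K))).symm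
    have htri : (‖∑ n ∈ Finset.Ico 1 (2^(K+1)), FF u a n z‖₊ : ℝ≥0∞)
        ≤ (‖∑ n ∈ Finset.Ico 1 (2^K), FF u a n z‖₊ : ℝ≥0∞)
          + (‖∑ n ∈ Finset.Ico (2^K) (2^(K+1)), FF u a n z‖₊ : ℝ≥0∞) := by
      rw [hsplit]; exact_mod_cast nnnorm_add_le _ _
    have hblock : (‖∑ n ∈ Finset.Ico (2^K) (2^(K+1)), FF u a n z‖₊ : ℝ≥0∞)
        ≤ MRmax u a (2^K) (2^K) z := by
      have he : Finset.Ico (2^K) (2^(K+1)) = Finset.Ico (2^K) (2^K + 2^K) := by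
        congr 1; rw [pow_succ, mul_two]
      rw [he, MRmax]
      exact le_iSup₂ (f := fun m (_ : m ∈ Finset.range (2^K+1)) =>
        (‖∑ n ∈ Finset.Ico (2^K) (2^K + m), FF u a n z‖₊ : ℝ≥0∞)) (2^K)
        (Finset.mem_range.mpr (Nat.lt_succ_self _))
    rw [Finset.sum_range_succ]
    exact le_trans htri (add_le_add (ih z) hblock)

lemma claim2 (u : ℝ) (a : ℕ → ℂ) (z : TorusInf) (N : ℕ) :
    (‖∑ n ∈ Finset.Icc 1 N, FF u a n z‖₊ : ℝ≥0∞)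
      ≤ ∑' k : ℕ, MRmax u a (2^k) (2^k) z := by
  rcases Nat.eq_zero_or_pos N with rfl | hN
  · simp
  have hN0 : N ≠ 0 := hN.ne'
  set k := Nat.log 2 N with hk
  have h1 : 2^k ≤ N := Nat.pow_log_le_self 2 hN0
  have h2 : N < 2^(k+1) := Nat.lt_pow_succ_log_self (by norm_num) N
  have hp : 2^(k+1) = 2^k + 2^k := by rw [pow_succ, mul_two]
  have hIcc : Finset.Icc 1 N = Finset.Ico 1 (N+1) := by rw [Finset.Ico_add_one_right_eq_Icc]
  have hsplit : ∑ n ∈ Finset.Ico 1 (N+1), FF u a n z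
      = (∑ n ∈ Finset.Ico 1 (2^k), FF u a n z)
        + ∑ n ∈ Finset.Ico (2^k) (N+1), FF u a n z :=
    (Finset.sum_Ico_consecutive _ Nat.one_le_two_pow (by omega)).symm
  have htri : (‖∑ n ∈ Finset.Ico 1 (N+1), FF u a n z‖₊ : ℝ≥0∞)
      ≤ (‖∑ n ∈ Finset.Ico 1 (2^k), FF u a n z‖₊ : ℝ≥0∞)
        + (‖∑ n ∈ Finset.Ico (2^k) (N+1), FF u a n z‖₊ : ℝ≥0∞) := by
    rw [hsplit]; exact_mod_cast nnnorm_add_le _ _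
  have hsec : (‖∑ n ∈ Finset.Ico (2^k) (N+1), FF u a n z‖₊ : ℝ≥0∞)
      ≤ MRmax u a (2^k) (2^k) z := by
    have he : Finset.Ico (2^k) (N+1) = Finset.Ico (2^k) (2^k + (N+1-2^k)) := by
      congr 1; omega
    rw [he, MRmax]
    exact le_iSup₂ (f := fun m (_ : m ∈ Finset.range (2^k+1)) =>
      (‖∑ n ∈ Finset.Ico (2^k) (2^k + m), FF u a n z‖₊ : ℝ≥0∞)) (N+1-2^k)
      (Finset.mem_range.mpr (by omega))
  calc (‖∑ n ∈ Finset.Icc 1 N, FF u a n z‖₊ : ℝ≥0∞)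
      = (‖∑ n ∈ Finset.Ico 1 (N+1), FF u a n z‖₊ : ℝ≥0∞) := by rw [hIcc]
    _ ≤ _ := htri
    _ ≤ (∑ k' ∈ Finset.range k, MRmax u a (2^k') (2^k') z) + MRmax u a (2^k) (2^k) z :=
        add_le_add (claim1 u a k z) hsec
    _ = ∑ k' ∈ Finset.range (k+1), MRmax u a (2^k') (2^k') z := (Finset.sum_range_succ _ _).symm
    _ ≤ ∑' k' : ℕ, MRmax u a (2^k') (2^k') z := ENNReal.sum_le_tsum _


/-- For every `u > 0` there is `C = C(u) > 0` such that for every square-summable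
sequence `(a_n)_{n ≥ 1}` (encoded as `a : ℕ → ℂ` with `a 0 = 0`),
`(∫_{𝕋^∞} sup_N |∑_{n=1}^N a_n n^{-u} χ_z(n)|² dm)^{1/2} ≤ C (∑ |a_n|²)^{1/2}`. -/
theorem maximal_inequality_H2 (u : ℝ) (hu : 0 < u) :
    ∃ C : ℝ, 0 < C ∧
      ∀ a : ℕ → ℂ, a 0 = 0 → (Summable fun n => ‖a n‖ ^ 2) →
        (∫⁻ z, (⨆ N : ℕ,
            (‖∑ n ∈ Finset.Icc 1 N, a n * (((n : ℝ) ^ (-u) : ℝ) : ℂ) * chiz z n‖₊ : ℝ≥0∞)) ^ 2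
          ∂haarT) ^ (1 / 2 : ℝ)
        ≤ ENNReal.ofReal C * (∑' n : ℕ, (‖a n‖₊ : ℝ≥0∞) ^ 2) ^ (1 / 2 : ℝ) := by
  set r : ℝ := (2:ℝ) ^ (-u) with hr
  have hr0 : 0 < r := Real.rpow_pos_of_pos two_pos _
  have hr1 : r < 1 := Real.rpow_lt_one_of_one_lt_of_neg one_lt_two (neg_lt_zero.mpr hu)
  have hsum : Summable (fun k : ℕ => ((k:ℝ)+1) * r^k) := by
    have h1 : Summable (fun k : ℕ => (k:ℝ) * r^k) := by
      simpa using summable_pow_mul_geometric_of_norm_lt_one 1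
        (by rwa [Real.norm_eq_abs, abs_of_pos hr0])
    have h2 : Summable (fun k : ℕ => r^k) := summable_geometric_of_lt_one hr0.le hr1
    simpa [add_mul] using h1.add h2
  have hCreal0 : 0 ≤ ∑' k : ℕ, ((k:ℝ)+1) * r^k := tsum_nonneg fun k => by positivity
  refine ⟨(∑' k : ℕ, ((k:ℝ)+1) * r^k) + 1, by linarith, ?_⟩
  intro a ha0 _
  set Atot := ∑' n : ℕ, ((‖a n‖₊ : ℝ≥0∞)) ^ 2 with hAtot
  show lam (fun z => ⨆ N : ℕ, (‖∑ n ∈ Finset.Icc 1 N, FF u a n z‖₊ : ℝ≥0∞))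
      ≤ ENNReal.ofReal ((∑' k : ℕ, ((k:ℝ)+1) * r^k) + 1) * Atot ^ (1/2:ℝ)
  have hck : ∀ k : ℕ, ((2:ℝ) ^ (k:ℕ)) ^ (-u) = r ^ k := by
    intro k
    rw [← Real.rpow_natCast (2:ℝ) k, ← Real.rpow_mul (by norm_num), mul_comm,
      Real.rpow_mul (by norm_num), Real.rpow_natCast]
  have hWk : ∀ k : ℕ, (∑ n ∈ Finset.Ico (2^k) (2^k + 2^k), wb u a n)
      ≤ (ENNReal.ofReal (r^k)) ^ 2 * Atot := by
    intro k
    have hterm : ∀ n ∈ Finset.Ico (2^k) (2^k + 2^k),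
        wb u a n ≤ (ENNReal.ofReal (r^k)) ^ 2 * ((‖a n‖₊ : ℝ≥0∞)) ^ 2 := by
      intro n hn
      have hn1 : 2^k ≤ n := (Finset.mem_Ico.mp hn).1
      have hb : (‖bb u a n‖₊ : ℝ≥0∞) ≤ ENNReal.ofReal (r^k) * (‖a n‖₊ : ℝ≥0∞) := by
        have hnorm : ‖bb u a n‖ = ‖a n‖ * ((n:ℝ) ^ (-u)) := by
          rw [bb, norm_mul, Complex.norm_real, Real.norm_eq_abs,
            _root_.abs_of_nonneg (Real.rpow_nonneg (Nat.cast_nonneg n) _)]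
        have hcast : ((2:ℝ) ^ (k:ℕ)) ≤ (n:ℝ) := by exact_mod_cast Nat.cast_le.mpr hn1
        have hle : (n:ℝ) ^ (-u) ≤ r ^ k := by
          rw [← hck k]
          exact Real.rpow_le_rpow_of_nonpos (by positivity) hcast (neg_nonpos.mpr hu.le)
        calc (‖bb u a n‖₊ : ℝ≥0∞) = ENNReal.ofReal ‖bb u a n‖ :=
              (ofReal_norm_eq_coe_nnnorm _).symm
          _ = ENNReal.ofReal ‖a n‖ * ENNReal.ofReal ((n:ℝ) ^ (-u)) := by
              rw [hnorm, ENNReal.ofReal_mul (norm_nonneg _)]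
          _ ≤ ENNReal.ofReal ‖a n‖ * ENNReal.ofReal (r^k) :=
              mul_le_mul_right (ENNReal.ofReal_le_ofReal hle) _
          _ = ENNReal.ofReal (r^k) * (‖a n‖₊ : ℝ≥0∞) := by
              rw [ofReal_norm_eq_coe_nnnorm, mul_comm]
      calc wb u a n = ((‖bb u a n‖₊ : ℝ≥0∞)) ^ 2 := rfl
        _ ≤ (ENNReal.ofReal (r^k) * (‖a n‖₊ : ℝ≥0∞)) ^ 2 := pow_le_pow_left' hb 2
        _ = (ENNReal.ofReal (r^k)) ^ 2 * ((‖a n‖₊ : ℝ≥0∞)) ^ 2 := mul_pow _ _ 2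
    calc (∑ n ∈ Finset.Ico (2^k) (2^k + 2^k), wb u a n)
        ≤ ∑ n ∈ Finset.Ico (2^k) (2^k + 2^k),
            (ENNReal.ofReal (r^k)) ^ 2 * ((‖a n‖₊ : ℝ≥0∞)) ^ 2 := Finset.sum_le_sum hterm
      _ = (ENNReal.ofReal (r^k)) ^ 2
            * ∑ n ∈ Finset.Ico (2^k) (2^k + 2^k), ((‖a n‖₊ : ℝ≥0∞)) ^ 2 :=
          (Finset.mul_sum _ _ _).symm
      _ ≤ (ENNReal.ofReal (r^k)) ^ 2 * Atot :=
          mul_le_mul_right (ENNReal.sum_le_tsum _) _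
  have hblock : ∀ k : ℕ, lam (MRmax u a (2^k) (2^k))
      ≤ (((k+1:ℕ)) : ℝ≥0∞) * ENNReal.ofReal (r^k) * Atot ^ (1/2:ℝ) := by
    intro k
    calc lam (MRmax u a (2^k) (2^k))
        ≤ (((k+1:ℕ)) : ℝ≥0∞) * (∑ n ∈ Finset.Ico (2^k) (2^k + 2^k), wb u a n) ^ (1/2:ℝ) :=
          MR u a ha0 k (2^k)
      _ ≤ (((k+1:ℕ)) : ℝ≥0∞) * ((ENNReal.ofReal (r^k)) ^ 2 * Atot) ^ (1/2:ℝ) :=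
          mul_le_mul_right (ENNReal.rpow_le_rpow (hWk k) (by norm_num)) _
      _ = (((k+1:ℕ)) : ℝ≥0∞) * ENNReal.ofReal (r^k) * Atot ^ (1/2:ℝ) := by
          rw [ENNReal.mul_rpow_of_nonneg _ _ (by norm_num : (0:ℝ) ≤ 1/2), rpow_half_sq,
            mul_assoc]
  have hCoef : (∑' k : ℕ, (((k+1:ℕ)) : ℝ≥0∞) * ENNReal.ofReal (r^k))
      ≤ ENNReal.ofReal ((∑' k : ℕ, ((k:ℝ)+1) * r^k) + 1) := by
    have hterm : ∀ k : ℕ, (((k+1:ℕ)) : ℝ≥0∞) * ENNReal.ofReal (r^k)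
        = ENNReal.ofReal (((k:ℝ)+1) * r^k) := by
      intro k
      rw [ENNReal.ofReal_mul (by positivity), ← ENNReal.ofReal_natCast (k+1)]
      push_cast
      ring_nf
    simp_rw [hterm]
    rw [← ENNReal.ofReal_tsum_of_nonneg (fun k => by positivity) hsum]
    exact ENNReal.ofReal_le_ofReal (by linarith)
  calc lam (fun z => ⨆ N : ℕ, (‖∑ n ∈ Finset.Icc 1 N, FF u a n z‖₊ : ℝ≥0∞))
      ≤ lam (fun z => ∑' k : ℕ, MRmax u a (2^k) (2^k) z) :=
        lam_mono fun z => iSup_le fun N => claim2 u a z N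
    _ ≤ ∑' k : ℕ, lam (MRmax u a (2^k) (2^k)) :=
        lam_tsum fun k => measurable_MRmax u a _ _
    _ ≤ ∑' k : ℕ, (((k+1:ℕ)) : ℝ≥0∞) * ENNReal.ofReal (r^k) * Atot ^ (1/2:ℝ) :=
        ENNReal.tsum_le_tsum hblock
    _ = (∑' k : ℕ, (((k+1:ℕ)) : ℝ≥0∞) * ENNReal.ofReal (r^k)) * Atot ^ (1/2:ℝ) :=
        ENNReal.tsum_mul_right
    _ ≤ ENNReal.ofReal ((∑' k : ℕ, ((k:ℝ)+1) * r^k) + 1) * Atot ^ (1/2:ℝ) :=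
        mul_le_mul_left hCoef _
end
end
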